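/- Every monomial of degree n+1 in the first partial derivatives of F is a maximal minor of the second Jacobian matrix: for any 1 ≤ j₁ ≤ ⋯ ≤ j_{n+1} ≤ n, the product ∏_{a=1}^{n+1} f_{j_a} equals det of the (n+1)×(n+1) submatrix of Jac₂(F) with columns β_{0 j₁}, β_{1 j₂}, …, β_{n j_{n+1}}; hence J₁(F)^{n+1} ⊆ J₂(F). -/
import Mathlib


open MvPolynomial Pointwise

/-- First partial derivative f_i = ∂F/∂x_i. -/
noncomputable def pd {n : ℕ} (F : MvPolynomial (Fin n) ℂ) (i : Fin n) : MvPolynomial (Fin n) ℂ :=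
  pderiv i F

/-- Second partial derivative f_{ij} = ∂²F/∂x_i∂x_j. -/
noncomputable def pd2 {n : ℕ} (F : MvPolynomial (Fin n) ℂ) (i j : Fin n) : MvPolynomial (Fin n) ℂ :=
  pderiv i (pderiv j F)

/-- Q_{ij;kl}(F) = f_{ik} f_j f_l − f_{jk} f_i f_l − f_{il} f_j f_k + f_{jl} f_i f_k. -/
noncomputable def Qq {n : ℕ} (F : MvPolynomial (Fin n) ℂ) (i j k l : Fin n) :
    MvPolynomial (Fin n) ℂ :=
  pd2 F i k * pd F j * pd F l - pd2 F j k * pd F i * pd F l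
    - pd2 F i l * pd F j * pd F k + pd2 F j l * pd F i * pd F k

/-- Second Jacobian matrix: rows β₀,…,β_n (row 0 = β₀, row t.succ = β_t);
columns β_{0k} (Sum.inl k) and β_{ij} (Sum.inr (i,j)). -/
noncomputable def jac2 {n : ℕ} (F : MvPolynomial (Fin n) ℂ) :
    Fin (n + 1) → (Fin n ⊕ Fin n × Fin n) → MvPolynomial (Fin n) ℂ := fun r col =>
  match col with
  | Sum.inl k => if r = 0 then pderiv k F else 0
  | Sum.inr (i, j) =>
      if r = 0 then
        (if i = j then MvPolynomial.C (2⁻¹ : ℂ) * pderiv i (pderiv i F)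
         else pderiv i (pderiv j F))
      else if r = i.succ then pderiv j F
      else if r = j.succ then pderiv i F
      else 0

/-- Jacobian ideal J₁(F) = (∂₁F, …, ∂_nF). -/
noncomputable def J1 {n : ℕ} (F : MvPolynomial (Fin n) ℂ) : Ideal (MvPolynomial (Fin n) ℂ) :=
  Ideal.span (Set.range fun i : Fin n => pderiv i F)

/-- The ideal Q(F) generated by all Q_{ij;kl}(F). -/
noncomputable def QI {n : ℕ} (F : MvPolynomial (Fin n) ℂ) : Ideal (MvPolynomial (Fin n) ℂ) :=
  Ideal.span {q | ∃ i j k l : Fin n, q = Qq F i j k l}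

/-- Second Jacobian ideal: ideal of maximal minors of Jac₂(F). -/
noncomputable def J2 {n : ℕ} (F : MvPolynomial (Fin n) ℂ) : Ideal (MvPolynomial (Fin n) ℂ) :=
  Ideal.span {d | ∃ c : Fin (n + 1) → (Fin n ⊕ Fin n × Fin n),
    d = Matrix.det (Matrix.of fun a b => jac2 F a (c b))}

lemma det_eq_prod {n : ℕ} (F : MvPolynomial (Fin n) ℂ) (j : Fin (n + 1) → Fin n)
    (hj : Monotone j) :
    Matrix.det (Matrix.of fun a b => jac2 F a
        ((Fin.cases (Sum.inl (j 0)) (fun t : Fin n => Sum.inr (t, j t.succ)) :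
          Fin (n + 1) → Fin n ⊕ Fin n × Fin n) b)) = ∏ b : Fin (n + 1), pderiv (j b) F := by
  set M : Matrix (Fin (n+1)) (Fin (n+1)) (MvPolynomial (Fin n) ℂ) :=
    Matrix.of fun a b => jac2 F a
        ((Fin.cases (Sum.inl (j 0)) (fun t : Fin n => Sum.inr (t, j t.succ)) :
          Fin (n + 1) → Fin n ⊕ Fin n × Fin n) b) with hM
  have key : ∀ σ : Equiv.Perm (Fin (n+1)), σ ≠ 1 → ∃ b, M (σ b) b = 0 := by
    intro σ hσ
    by_contra h
    push_neg at h
    -- σ 0 = 0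
    have h0 : σ 0 = 0 := by
      by_contra h0
      exact h 0 (by simp [hM, jac2, h0])
    have hstep : ∀ t : Fin n, σ t.succ = t.succ ∨ σ t.succ = (j t.succ).succ := by
      intro t
      by_contra hc
      push_neg at hc
      have hne0 : σ t.succ ≠ 0 := fun hh => (Fin.succ_ne_zero t) (σ.injective (hh.trans h0.symm))
      exact h t.succ (by simp [hM, jac2, hne0, hc.1, hc.2])
    -- the set of moved indices
    have hex : ∃ b, σ b ≠ b := by
      by_contra hall
      push_neg at hall
      exact hσ (Equiv.ext hall)
    classical
    set S : Finset (Fin n) := Finset.univ.filter (fun t => σ t.succ ≠ t.succ) with hS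
    have hSne : S.Nonempty := by
      obtain ⟨b, hb⟩ := hex
      have hbne : b ≠ 0 := fun hh => hb (by rw [hh, h0])
      obtain ⟨t, rfl⟩ := Fin.exists_succ_eq.2 hbne
      exact ⟨t, by simp [hS, hb]⟩
    set t := S.max' hSne with htdef
    have htS : σ t.succ ≠ t.succ := by
      have := S.max'_mem hSne
      simpa [hS] using this
    have hmax : ∀ s : Fin n, σ s.succ ≠ s.succ → s ≤ t := by
      intro s hs
      exact S.le_max' s (by simp [hS, hs])
    have hσt : σ t.succ = (j t.succ).succ := (hstep t).resolve_left htS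
    have hjt : j t.succ < t := by
      rcases lt_trichotomy (j t.succ) t with h1 | h1 | h1
      · exact h1
      · exact absurd (by rw [hσt, h1]) htS
      · -- j t.succ > t, so it's fixed
        have hfix : σ (j t.succ).succ = (j t.succ).succ := by
          by_contra hh
          exact absurd (hmax _ hh) (not_le.2 h1)
        have := σ.injective (hσt.trans hfix.symm)
        exact (ne_of_lt h1 (Fin.succ_injective _ this)).elim
    -- preimage of t.succ
    set w := σ.symm t.succ with hw
    have hσw : σ w = t.succ := σ.apply_symm_apply _
    have hwne0 : w ≠ 0 := by
      intro hh
      rw [hh, h0] at hσw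
      exact (Fin.succ_ne_zero t) hσw.symm
    obtain ⟨s, hsw⟩ := Fin.exists_succ_eq.2 hwne0
    rw [← hsw] at hσw
    have hsS : σ s.succ ≠ s.succ := by
      rw [hσw]
      intro hh
      have : s = t := Fin.succ_injective _ hh.symm
      rw [this] at hσw
      exact htS hσw
    have hst : s < t := lt_of_le_of_ne (hmax s hsS)
      (fun hh => hsS (by rw [hh] at hσw ⊢; exact hσw))
    have hσs : σ s.succ = (j s.succ).succ := (hstep s).resolve_left hsS
    have hjs : j s.succ = t := Fin.succ_injective _ (hσs.symm.trans hσw)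
    have : j s.succ ≤ j t.succ := hj (Fin.succ_le_succ_iff.2 hst.le)
    rw [hjs] at this
    exact absurd (lt_of_le_of_lt this hjt) (lt_irrefl t)
  rw [Matrix.det_apply]
  rw [Finset.sum_eq_single (1 : Equiv.Perm (Fin (n+1)))]
  · simp only [Equiv.Perm.sign_one, one_smul, Equiv.Perm.one_apply]
    refine Finset.prod_congr rfl fun b _ => ?_
    induction b using Fin.cases with
    | zero => simp [hM, jac2]
    | succ t => simp [hM, jac2, Fin.succ_ne_zero]
  · intro σ _ hσ
    obtain ⟨b, hb⟩ := key σ hσ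
    rw [Finset.prod_eq_zero (f := fun i => M (σ i) i) (Finset.mem_univ b) hb, smul_zero]
  · intro hh
    exact absurd (Finset.mem_univ _) hh

theorem stmt15 {n : ℕ} (F : MvPolynomial (Fin n) ℂ) (j : Fin (n + 1) → Fin n)
    (hj : Monotone j) :
    Matrix.det (Matrix.of fun a b => jac2 F a
        ((Fin.cases (Sum.inl (j 0)) (fun t : Fin n => Sum.inr (t, j t.succ)) :
          Fin (n + 1) → Fin n ⊕ Fin n × Fin n) b)) = ∏ b : Fin (n + 1), pderiv (j b) F ∧
      J1 F ^ (n + 1) ≤ J2 F := by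
  classical
  have hprod_mem : ∀ g : Fin (n + 1) → Fin n, (∏ b, pderiv (g b) F) ∈ J2 F := by
    intro g
    have hm : Monotone (g ∘ Tuple.sort g) := Tuple.monotone_sort g
    have hd := det_eq_prod F (g ∘ Tuple.sort g) hm
    have hp : (∏ b, pderiv ((g ∘ Tuple.sort g) b) F) = ∏ b, pderiv (g b) F :=
      Equiv.prod_comp (Tuple.sort g) (fun b => pderiv (g b) F)
    rw [← hp, ← hd]
    exact Ideal.subset_span ⟨_, rfl⟩
  refine ⟨det_eq_prod F j hj, ?_⟩
  have hspan : J1 F ^ (n + 1) =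
      Ideal.span ((Set.range fun i : Fin n => pderiv i F) ^ (n + 1)) :=
    Submodule.span_pow _ (n + 1)
  rw [hspan, Ideal.span_le]
  intro x hx
  rw [Set.mem_pow] at hx
  obtain ⟨f, hf⟩ := hx
  have hmem : ∀ i, ∃ k : Fin n, pderiv k F = (f i : MvPolynomial (Fin n) ℂ) := fun i => (f i).2
  choose g hg using hmem
  have hx' : x = ∏ i, pderiv (g i) F := by
    rw [← hf, List.prod_ofFn]
    exact (Finset.prod_congr rfl fun i _ => (hg i)).symm
  rw [hx']
  exact hprod_mem g
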